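/- arXiv:2506.12599 — 2 statements merged into one kernel-verified Lean document; each statement's English description precedes it below -/
import Mathlib

section
/- Let K be a natural number, let α, β : Fin K → ℂ with all α_k ≠ 0, and suppose for each k either β_k = α_k or β_k = 1/conj(α_k). Let X₁(z) = c₁·Π_{k}(z − α_k) and X₂(z) = c₂·Π_{k}(z − β_k) with c₁, c₂ ≠ 0, and let x₁, x₂ ∈ ℂ^{K+1} be their coefficient vectors. If the coefficient vectors have equal Euclidean norms, ‖x₁‖₂ = ‖x₂‖₂, then |X₁(e^{iθ})| = |X₂(e^{iθ})| for all real θ. In particular, the evaluation |X(e^{-iθ})|² on the unit circle is the same for any transmitted BMOCZ coefficient sequence normalized to a fixed norm. -/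
open Polynomial Finset

private lemma rev_X_sub_C (a : ℂ) : (X - C a).reverse = 1 - C a * X := by
  ext n
  rw [coeff_reverse, natDegree_X_sub_C]
  rcases n with _|_|n <;> simp [revAt_le, revAt_eq_self_of_lt, coeff_one, coeff_X, coeff_C]

private lemma rev_prod {K : ℕ} (γ : Fin K → ℂ) (s : Finset (Fin K)) :
    (∏ k ∈ s, (X - C (γ k))).reverse = ∏ k ∈ s, (1 - C (γ k) * X) := by
  classical
  induction s using Finset.induction with
  | empty => rw [Finset.prod_empty, Finset.prod_empty, ← C_1, reverse_C]
  | insert a s h ih =>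
      rw [Finset.prod_insert h, Finset.prod_insert h, reverse_mul_of_domain, ih,
        rev_X_sub_C]

private lemma mirror_eq {K : ℕ} (c : ℂ) (γ : Fin K → ℂ) :
    ((C c * ∏ k, (X - C (γ k))).map (starRingEnd ℂ)).reverse
      = C ((starRingEnd ℂ) c) * ∏ k, (1 - C ((starRingEnd ℂ) (γ k)) * X) := by
  rw [Polynomial.map_mul, Polynomial.map_prod, map_C]
  simp only [Polynomial.map_sub, map_X, map_C]
  rw [reverse_mul_of_domain, reverse_C, rev_prod]

private lemma natDeg_eq {K : ℕ} (c : ℂ) (hc : c ≠ 0) (γ : Fin K → ℂ) :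
    (C c * ∏ k, (X - C (γ k))).natDegree = K := by
  rw [natDegree_C_mul hc, natDegree_prod_of_monic _ _ (fun k _ => monic_X_sub_C _)]
  simp

private lemma coeff_mul_mirror' {K : ℕ} (c : ℂ) (hc : c ≠ 0) (γ : Fin K → ℂ) :
    ((C c * ∏ k, (X - C (γ k))) *
        (C ((starRingEnd ℂ) c) * ∏ k, (1 - C ((starRingEnd ℂ) (γ k)) * X))).coeff K
      = ((∑ i ∈ Finset.range (K + 1),
          Complex.normSq ((C c * ∏ k, (X - C (γ k))).coeff i) : ℝ) : ℂ) := by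
  set P : ℂ[X] := C c * ∏ k, (X - C (γ k)) with hP
  rw [← mirror_eq]
  have hd : (P.map (starRingEnd ℂ)).natDegree = K := by
    rw [natDegree_map]; exact natDeg_eq c hc γ
  rw [coeff_mul, Finset.Nat.sum_antidiagonal_eq_sum_range_succ_mk]
  push_cast
  refine Finset.sum_congr rfl fun i hi => ?_
  have hiK : i ≤ K := Nat.lt_succ_iff.mp (Finset.mem_range.mp hi)
  rw [coeff_reverse, hd, revAt_le (Nat.sub_le _ _), Nat.sub_sub_self hiK, coeff_map,
    Complex.mul_conj]

private lemma factor_eq {a b : ℂ} (ha : a ≠ 0)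
    (hb : b = a ∨ b = 1 / (starRingEnd ℂ) a) :
    (X - C b) * (1 - C ((starRingEnd ℂ) b) * X)
      = C ((‖b‖ / ‖a‖ : ℝ) : ℂ)
          * ((X - C a) * (1 - C ((starRingEnd ℂ) a) * X)) := by
  have habs : ‖a‖ ≠ 0 := norm_ne_zero_iff.mpr ha
  rcases hb with rfl | rfl
  · rw [div_self habs]; simp
  · have ha' : (starRingEnd ℂ) a ≠ 0 := by simpa using ha
    have hb1 : (starRingEnd ℂ) (1 / (starRingEnd ℂ) a) = 1 / a := by
      simp [map_div₀]
    have ht : ((‖1 / (starRingEnd ℂ) a‖ / ‖a‖ : ℝ) : ℂ)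
        = 1 / (a * (starRingEnd ℂ) a) := by
      rw [norm_div, norm_one, Complex.norm_conj]
      push_cast
      rw [Complex.mul_conj, Complex.normSq_eq_norm_sq]
      push_cast
      ring
    rw [hb1, ht]
    have L : (X - C (1 / (starRingEnd ℂ) a)) * (1 - C (1 / a) * X)
        = C (-(1/a)) * X ^ 2
          + C (1 + (1 / (starRingEnd ℂ) a) * (1/a)) * X
          + C (-(1 / (starRingEnd ℂ) a)) := by
      simp only [C_add, C_mul, C_1, C_neg]; ring
    have R : C (1 / (a * (starRingEnd ℂ) a)) * ((X - C a) * (1 - C ((starRingEnd ℂ) a) * X))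
        = C (-((1 / (a * (starRingEnd ℂ) a)) * (starRingEnd ℂ) a)) * X ^ 2
          + C ((1 / (a * (starRingEnd ℂ) a)) * (1 + a * (starRingEnd ℂ) a)) * X
          + C (-((1 / (a * (starRingEnd ℂ) a)) * a)) := by
      simp only [C_add, C_mul, C_1, C_neg]; ring
    rw [L, R]
    congr 3 <;> · field_simp; try ring

private lemma abs_sub_eq {a b z : ℂ} (ha : a ≠ 0) (hz : ‖z‖ = 1)
    (hb : b = a ∨ b = 1 / (starRingEnd ℂ) a) :
    ‖z - b‖
      = Real.sqrt (‖b‖ / ‖a‖) * ‖z - a‖ := by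
  have habs : ‖a‖ ≠ 0 := norm_ne_zero_iff.mpr ha
  rcases hb with rfl | rfl
  · rw [div_self habs, Real.sqrt_one, one_mul]
  · have ha' : (starRingEnd ℂ) a ≠ 0 := by simpa using ha
    have hzc : z * (starRingEnd ℂ) z = 1 := by
      rw [Complex.mul_conj, Complex.normSq_eq_norm_sq, hz]; norm_num
    have h1 : z - 1 / (starRingEnd ℂ) a = (z * (starRingEnd ℂ) a - 1) / (starRingEnd ℂ) a := by
      field_simp
    have h2 : z * (starRingEnd ℂ) a - 1 = z * (starRingEnd ℂ) (a - z) := by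
      rw [map_sub, mul_sub, hzc]
    have h3 : ‖1 / (starRingEnd ℂ) a‖ = (‖a‖)⁻¹ := by
      rw [norm_div, norm_one, Complex.norm_conj, one_div]
    rw [h1, norm_div, h2, norm_mul, hz, one_mul, Complex.norm_conj, Complex.norm_conj,
      norm_sub_rev a z, h3]
    have h4 : (‖a‖)⁻¹ / ‖a‖ = ((‖a‖)⁻¹) ^ 2 := by
      field_simp
    rw [h4, Real.sqrt_sq (by positivity), div_eq_mul_inv, mul_comm]

/-- If two BMOCZ polynomials (zero tuples related by conjugate-reciprocal flips) have
coefficient vectors of equal Euclidean norm, then their magnitudes agree everywhere on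
the unit circle. -/
theorem abs_on_unit_circle_eq_of_flips_of_norm_eq
    (K : ℕ) (α β : Fin K → ℂ) (hα : ∀ k, α k ≠ 0)
    (hβ : ∀ k, β k = α k ∨ β k = 1 / (starRingEnd ℂ) (α k))
    (c₁ c₂ : ℂ) (hc₁ : c₁ ≠ 0) (hc₂ : c₂ ≠ 0)
    (hnorm :
      Real.sqrt (∑ i : Fin (K + 1),
          ‖(Polynomial.C c₁ *
            ∏ k : Fin K, (Polynomial.X - Polynomial.C (α k))).coeff i‖ ^ 2)
        = Real.sqrt (∑ i : Fin (K + 1),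
          ‖(Polynomial.C c₂ *
            ∏ k : Fin K, (Polynomial.X - Polynomial.C (β k))).coeff i‖ ^ 2)) :
    ∀ θ : ℝ,
      ‖(Polynomial.C c₁ *
          ∏ k : Fin K, (Polynomial.X - Polynomial.C (α k))).eval
            (Complex.exp (Complex.I * (θ : ℂ)))‖
        = ‖(Polynomial.C c₂ *
          ∏ k : Fin K, (Polynomial.X - Polynomial.C (β k))).eval
            (Complex.exp (Complex.I * (θ : ℂ)))‖ := by
  classical
  have hβ0 : ∀ k, β k ≠ 0 := by
    intro k
    rcases hβ k with h | h
    · rw [h]; exact hα k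
    · rw [h]
      exact one_div_ne_zero (by simpa using hα k)
  set r : Fin K → ℝ := fun k => ‖β k‖ / ‖α k‖ with hr
  have hrpos : ∀ k, 0 < r k := fun k =>
    div_pos (norm_pos_iff.mpr (hβ0 k)) (norm_pos_iff.mpr (hα k))
  set P₁ : Polynomial ℂ := Polynomial.C c₁ * ∏ k : Fin K, (X - C (α k)) with hP₁
  set P₂ : Polynomial ℂ := Polynomial.C c₂ * ∏ k : Fin K, (X - C (β k)) with hP₂
  set Q : Polynomial ℂ :=
    ∏ k : Fin K, ((X - C (α k)) * (1 - C ((starRingEnd ℂ) (α k)) * X)) with hQ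
  -- the two mirror products
  have h1 : P₁ * (C ((starRingEnd ℂ) c₁) * ∏ k, (1 - C ((starRingEnd ℂ) (α k)) * X))
      = C ((Complex.normSq c₁ : ℂ)) * Q := by
    rw [hP₁, hQ, mul_mul_mul_comm, ← Finset.prod_mul_distrib, ← C_mul, Complex.mul_conj]
  have h2 : P₂ * (C ((starRingEnd ℂ) c₂) * ∏ k, (1 - C ((starRingEnd ℂ) (β k)) * X))
      = C ((Complex.normSq c₂ : ℂ) * ∏ k, ((r k : ℝ) : ℂ)) * Q := by
    rw [hP₂, hQ, mul_mul_mul_comm, ← Finset.prod_mul_distrib, ← C_mul, Complex.mul_conj]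
    rw [Finset.prod_congr rfl fun k _ => factor_eq (hα k) (hβ k)]
    rw [Finset.prod_mul_distrib, ← map_prod (C : ℂ →+* Polynomial ℂ), ← mul_assoc, ← C_mul]
  -- real coefficient sums
  set S₁ : ℝ := ∑ i ∈ Finset.range (K + 1), Complex.normSq (P₁.coeff i) with hS₁
  set S₂ : ℝ := ∑ i ∈ Finset.range (K + 1), Complex.normSq (P₂.coeff i) with hS₂
  have e1 : ((S₁ : ℝ) : ℂ) = (Complex.normSq c₁ : ℂ) * Q.coeff K := by
    rw [← coeff_mul_mirror' c₁ hc₁ α, ← hP₁, h1, coeff_C_mul]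
  have e2 : ((S₂ : ℝ) : ℂ)
      = ((Complex.normSq c₂ : ℂ) * ∏ k, ((r k : ℝ) : ℂ)) * Q.coeff K := by
    rw [← coeff_mul_mirror' c₂ hc₂ β, ← hP₂, h2, coeff_C_mul]
  -- the norm hypothesis gives S₁ = S₂
  have hSeq : S₁ = S₂ := by
    have hn1 : (0:ℝ) ≤ ∑ i : Fin (K + 1), ‖P₁.coeff i‖ ^ 2 :=
      Finset.sum_nonneg fun i _ => by positivity
    have hn2 : (0:ℝ) ≤ ∑ i : Fin (K + 1), ‖P₂.coeff i‖ ^ 2 :=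
      Finset.sum_nonneg fun i _ => by positivity
    have h := congrArg (fun t : ℝ => t ^ 2) hnorm
    simp only [Real.sq_sqrt hn1, Real.sq_sqrt hn2] at h
    simp only [Complex.sq_norm] at h
    rw [hS₁, hS₂, ← Fin.sum_univ_eq_sum_range (fun i => Complex.normSq (P₁.coeff i)),
      ← Fin.sum_univ_eq_sum_range (fun i => Complex.normSq (P₂.coeff i))]
    exact h
  -- positivity of S₁
  have hcK : P₁.coeff K = c₁ := by
    have hm : (∏ k : Fin K, (X - C (α k))).Monic :=
      monic_prod_of_monic _ _ fun k _ => monic_X_sub_C _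
    have hd : (∏ k : Fin K, (X - C (α k))).natDegree = K := by
      rw [natDegree_prod_of_monic _ _ fun k _ => monic_X_sub_C _]; simp
    have h1' := hm.coeff_natDegree
    rw [hd] at h1'
    rw [hP₁, coeff_C_mul, h1', mul_one]
  have hS₁pos : 0 < S₁ := by
    have hle : Complex.normSq (P₁.coeff K) ≤ S₁ :=
      Finset.single_le_sum (f := fun i => Complex.normSq (P₁.coeff i))
        (fun i _ => Complex.normSq_nonneg _) (Finset.self_mem_range_succ K)
    rw [hcK] at hle
    exact lt_of_lt_of_le (Complex.normSq_pos.mpr hc₁) hle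
  have hQK : Q.coeff K ≠ 0 := by
    intro h
    rw [h, mul_zero] at e1
    exact_mod_cast hS₁pos.ne' (by exact_mod_cast e1)
  have keyC : (Complex.normSq c₂ : ℂ) * ∏ k, ((r k : ℝ) : ℂ) = (Complex.normSq c₁ : ℂ) :=
    mul_right_cancel₀ hQK (by rw [← e2, ← hSeq, e1])
  have key : Complex.normSq c₂ * ∏ k, r k = Complex.normSq c₁ := by
    exact_mod_cast keyC
  -- scalar magnitude identity
  have habs : ‖c₂‖ * ∏ k, Real.sqrt (r k) = ‖c₁‖ := by
    have hnn : (0:ℝ) ≤ ‖c₂‖ * ∏ k, Real.sqrt (r k) := by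
      apply mul_nonneg (norm_nonneg _)
      exact Finset.prod_nonneg fun k _ => Real.sqrt_nonneg _
    have hsq : (‖c₂‖ * ∏ k, Real.sqrt (r k)) ^ 2 = (‖c₁‖) ^ 2 := by
      rw [mul_pow, ← Finset.prod_pow,
        Finset.prod_congr rfl fun k _ => Real.sq_sqrt (hrpos k).le,
        Complex.sq_norm, Complex.sq_norm, key]
    calc ‖c₂‖ * ∏ k, Real.sqrt (r k)
        = Real.sqrt ((‖c₂‖ * ∏ k, Real.sqrt (r k)) ^ 2) := (Real.sqrt_sq hnn).symm
      _ = Real.sqrt ((‖c₁‖) ^ 2) := by rw [hsq]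
      _ = ‖c₁‖ := Real.sqrt_sq (norm_nonneg _)
  -- pointwise conclusion
  intro θ
  set z : ℂ := Complex.exp (Complex.I * (θ : ℂ)) with hzdef
  have hz : ‖z‖ = 1 := by
    rw [hzdef, mul_comm]
    exact Complex.norm_exp_ofReal_mul_I θ
  rw [hP₁, hP₂, eval_mul, eval_mul, eval_C, eval_C, eval_prod, eval_prod,
    norm_mul, norm_mul, norm_prod, norm_prod]
  simp only [eval_sub, eval_X, eval_C]
  rw [Finset.prod_congr rfl fun k (_ : k ∈ Finset.univ) => abs_sub_eq (hα k) hz (hβ k),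
    Finset.prod_mul_distrib, ← mul_assoc, habs]
end

section
/- Let K ≥ 1, ζ ∈ [0, 2π), r > 0, and let m : Fin K → {r, 1/r} be arbitrary (a choice of radius for each zero). Define the SBMOCZ polynomial X(z) = c · Π_{k=0}^{K-1}(z − m_k e^{iφ_k}) with φ_k = (2π − ζ)k/K + (2π + ζ(K−1))/(2K) and c ≠ 0. Then for all real θ, |X(e^{-iθ})|² = |X(e^{iθ})|². -/
open Real

private lemma sbmocz_factor_absSq (t s a : ℝ) :
    ‖Complex.exp (Complex.I * (t : ℂ)) - (a : ℂ) * Complex.exp (Complex.I * (s : ℂ))‖ ^ 2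
      = 1 + a ^ 2 - 2 * a * Real.cos (t - s) := by
  rw [Complex.sq_norm, mul_comm Complex.I (t:ℂ), mul_comm Complex.I (s:ℂ),
    Complex.exp_mul_I, Complex.exp_mul_I, Complex.normSq_apply]
  simp [Real.cos_sub, Complex.cos_ofReal_re, Complex.sin_ofReal_re]
  nlinarith [sin_sq_add_cos_sq t, sin_sq_add_cos_sq s]

/-- Lemma 1: the squared magnitude of any SBMOCZ polynomial on the unit circle is
symmetric, `|X(e^{-iθ})|² = |X(e^{iθ})|²`. -/
theorem sbmocz_abs_sq_symm_on_unit_circle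
    (K : ℕ) (hK : 1 ≤ K) (ζ : ℝ) (hζ : 0 ≤ ζ ∧ ζ < 2 * π)
    (r : ℝ) (hr : 0 < r) (m : Fin K → ℝ) (hm : ∀ k, m k = r ∨ m k = r⁻¹)
    (c : ℂ) (hc : c ≠ 0)
    (φ : ℕ → ℝ)
    (hφ : ∀ k, φ k = (2 * π - ζ) * k / K + (2 * π + ζ * ((K : ℝ) - 1)) / (2 * K)) :
    ∀ θ : ℝ,
      ‖c * ∏ k : Fin K,
          (Complex.exp (-Complex.I * (θ : ℂ)) -
            (m k : ℂ) * Complex.exp (Complex.I * (φ k : ℂ)))‖ ^ 2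
        = ‖c * ∏ k : Fin K,
            (Complex.exp (Complex.I * (θ : ℂ)) -
              (m k : ℂ) * Complex.exp (Complex.I * (φ k : ℂ)))‖ ^ 2 := by
  intro θ
  have hK0 : (K : ℝ) ≠ 0 := Nat.cast_ne_zero.mpr (by omega)
  -- general formula for |X(e^{it})|²
  have habs : ∀ t : ℝ,
      ‖c * ∏ k : Fin K,
        (Complex.exp (Complex.I * (t : ℂ)) -
          (m k : ℂ) * Complex.exp (Complex.I * (φ k : ℂ)))‖ ^ 2
      = ‖c‖ ^ 2 *
          ((∏ k : Fin K, m k) *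
            ∏ k : Fin K, (r + r⁻¹ - 2 * Real.cos (t - φ k))) := by
    intro t
    rw [norm_mul, mul_pow, norm_prod, ← Finset.prod_pow, ← Finset.prod_mul_distrib]
    congr 1
    refine Finset.prod_congr rfl fun k _ => ?_
    rw [sbmocz_factor_absSq]
    rcases hm k with h | h <;> rw [h] <;> field_simp <;> ring
  -- rewrite the LHS exponent: e^{-iθ} = e^{i(-θ)}
  have hneg : Complex.exp (-Complex.I * (θ : ℂ)) =
      Complex.exp (Complex.I * ((-θ : ℝ) : ℂ)) := by
    push_cast; ring_nf
  simp only [hneg]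
  rw [habs, habs]
  -- remains: the cosine products agree
  congr 2
  -- angle symmetry: φ k + φ (K-1-k) = 2π
  have hrev : ∀ k : Fin K, φ ((Fin.rev k : Fin K) : ℕ) = 2 * π - φ (k : ℕ) := by
    intro k
    have hkv : ((Fin.rev k : Fin K) : ℕ) = K - 1 - (k : ℕ) := by
      have := k.isLt
      simp [Fin.val_rev]
      omega
    have hk1 : (k : ℕ) ≤ K - 1 := by
      have := k.isLt; omega
    have hcast : ((K - 1 - (k : ℕ) : ℕ) : ℝ) = (K : ℝ) - 1 - (k : ℕ) := by
      rw [Nat.cast_sub hk1, Nat.cast_sub hK, Nat.cast_one]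
    rw [hkv, hφ, hφ, hcast]
    field_simp
    ring
  refine Fintype.prod_equiv Fin.revPerm _ _ fun k => ?_
  have : (-θ : ℝ) - φ (k : ℕ) = -((θ - φ ((Fin.rev k : Fin K) : ℕ)) + 2 * π) := by
    rw [hrev k]; ring
  rw [Fin.revPerm_apply, this, Real.cos_neg, Real.cos_add_two_pi]
end
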